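/- arXiv:0810.0041 — 2 statements merged into one kernel-verified Lean document; each statement's English description precedes it below -/
import Mathlib

section
/- If N is a δ-supplement submodule of M, then δ(N) = N ∩ δ(M). -/
open Submodule

section Defs

universe u v

variable (R : Type u) [Ring R]

/-- A submodule `L` is essential in `M` if it intersects every nonzero submodule nontrivially. -/
def IsEssentialSub {M : Type v} [AddCommGroup M] [Module R M] (L : Submodule R M) : Prop :=
  ∀ K : Submodule R M, K ≠ ⊥ → L ⊓ K ≠ ⊥

/-- A module is singular if it is isomorphic to `N ⧸ L` for some module `N` and
essential submodule `L ≤ N`. -/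
def IsSingular (M : Type v) [AddCommGroup M] [Module R M] : Prop :=
  ∃ (N : Type v) (_ : AddCommGroup N) (_ : Module R N) (L : Submodule R N),
    IsEssentialSub R L ∧ Nonempty ((N ⧸ L) ≃ₗ[R] M)

variable {M : Type v} [AddCommGroup M] [Module R M]

/-- `N` is small in `M`: `N + Z ≠ M` for every proper submodule `Z`. -/
def SmallSub (N : Submodule R M) : Prop :=
  ∀ Z : Submodule R M, Z ≠ ⊤ → N ⊔ Z ≠ ⊤

/-- `N` is δ-small in `M`: `N + Z ≠ M` for every proper submodule `Z` with `M ⧸ Z` singular. -/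
def DeltaSmall (N : Submodule R M) : Prop :=
  ∀ Z : Submodule R M, Z ≠ ⊤ → IsSingular R (M ⧸ Z) → N ⊔ Z ≠ ⊤

/-- `δ(M)`: the sum of all δ-small submodules of `M`. -/
def deltaRad : Submodule R M := sSup {N : Submodule R M | DeltaSmall R N}

/-- The radical: intersection of all maximal submodules. -/
def radM : Submodule R M := sInf {K : Submodule R M | IsCoatom K}

/-- The socle: sum of all simple submodules. -/
def socM : Submodule R M := sSup {S : Submodule R M | IsAtom S}

/-- `N` is a δ-supplement of `K` in `M`: `N + K = M` and `N ∩ K` is δ-small in `N`. -/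
def IsDeltaSupplement (N K : Submodule R M) : Prop :=
  N ⊔ K = ⊤ ∧ DeltaSmall R ((N ⊓ K).comap N.subtype)

/-- `N` is a δ-supplement submodule of `M`. -/
def IsDeltaSupplementSub (N : Submodule R M) : Prop :=
  ∃ K : Submodule R M, IsDeltaSupplement R N K

/-- `N` is a supplement of `K` in `M`: `N + K = M` and `N ∩ K` is small in `N`. -/
def IsSupplement (N K : Submodule R M) : Prop :=
  N ⊔ K = ⊤ ∧ SmallSub R ((N ⊓ K).comap N.subtype)

/-- `M` is δ-supplemented: every submodule has a δ-supplement. -/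
def DeltaSupplemented (M : Type v) [AddCommGroup M] [Module R M] : Prop :=
  ∀ L : Submodule R M, ∃ N : Submodule R M, IsDeltaSupplement R N L

/-- `M` is supplemented: every submodule has a supplement. -/
def Supplemented (M : Type v) [AddCommGroup M] [Module R M] : Prop :=
  ∀ L : Submodule R M, ∃ N : Submodule R M, IsSupplement R N L

/-- `N` is δ-coclosed in `M`: if `X ≤ N`, `N/X` is singular and `N/X ≪_δ M/X`, then `X = N`. -/
def DeltaCoclosed (N : Submodule R M) : Prop :=
  ∀ X : Submodule R M, X ≤ N →
    IsSingular R ↥(N.map X.mkQ) → DeltaSmall R (N.map X.mkQ) → X = N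

/-- `N` is coclosed in `M`: if `X ≤ N` and `N/X ≪ M/X`, then `X = N`. -/
def Coclosed (N : Submodule R M) : Prop :=
  ∀ X : Submodule R M, X ≤ N → SmallSub R (N.map X.mkQ) → X = N

/-- A module is local if it has a largest proper submodule. -/
def LocalModule (M : Type v) [AddCommGroup M] [Module R M] : Prop :=
  ∃ L : Submodule R M, L ≠ ⊤ ∧ ∀ K : Submodule R M, K ≠ ⊤ → K ≤ L

/-- `M` is δ-local if `δ(M)` is δ-small in `M` and `δ(M)` is a maximal submodule. -/
def DeltaLocal (M : Type v) [AddCommGroup M] [Module R M] : Prop :=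
  DeltaSmall R (deltaRad R : Submodule R M) ∧ IsCoatom (deltaRad R : Submodule R M)

end Defs

section AuxProof

universe u v

variable {R : Type u} [Ring R] {M : Type v} [AddCommGroup M] [Module R M]

theorem essential_mono' {P : Type v} [AddCommGroup P] [Module R P] {L L' : Submodule R P}
    (h : L ≤ L') (hL : IsEssentialSub R L) : IsEssentialSub R L' := by
  intro K hK hbot
  exact hL K hK (le_bot_iff.mp (hbot ▸ inf_le_inf_right K h))

theorem isSingular_of_surjective {M' : Type v} [AddCommGroup M'] [Module R M']
    (f : M →ₗ[R] M') (hf : Function.Surjective f) (hM : IsSingular R M) : IsSingular R M' := by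
  obtain ⟨P, iP1, iP2, L, hL, ⟨e⟩⟩ := hM
  let ψ : P →ₗ[R] M' := f ∘ₗ (e : P ⧸ L →ₗ[R] M) ∘ₗ L.mkQ
  have hψ : Function.Surjective ψ := by
    intro y
    obtain ⟨x, hx⟩ := hf y
    obtain ⟨p, hp⟩ := L.mkQ_surjective (e.symm x)
    refine ⟨p, ?_⟩
    simp only [ψ, LinearMap.comp_apply, hp, LinearEquiv.coe_coe, LinearEquiv.apply_symm_apply, hx]
  refine ⟨P, iP1, iP2, LinearMap.ker ψ, essential_mono' ?_ hL, ⟨ψ.quotKerEquivOfSurjective hψ⟩⟩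
  intro x hx
  have hx0 : L.mkQ x = 0 := (Submodule.Quotient.mk_eq_zero L).mpr hx
  simp [ψ, LinearMap.mem_ker, hx0]

theorem isSingular_of_injective {M' : Type v} [AddCommGroup M'] [Module R M']
    (f : M →ₗ[R] M') (hf : Function.Injective f) (hM : IsSingular R M') : IsSingular R M := by
  obtain ⟨P, _, _, L, hL, ⟨e⟩⟩ := hM
  let g : M →ₗ[R] P ⧸ L := (e.symm : M' →ₗ[R] P ⧸ L) ∘ₗ f
  have hg : Function.Injective g := fun a b hab => hf (e.symm.injective hab)
  let S : Submodule R (P ⧸ L) := LinearMap.range g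
  let Q : Submodule R P := S.comap L.mkQ
  let φ : ↥Q →ₗ[R] ↥S := LinearMap.codRestrict S (L.mkQ ∘ₗ Q.subtype) (fun q => q.2)
  have hφsurj : Function.Surjective φ := by
    rintro ⟨s, hs⟩
    obtain ⟨p, rfl⟩ := L.mkQ_surjective s
    exact ⟨⟨p, hs⟩, rfl⟩
  have hker : ∀ q : ↥Q, q ∈ LinearMap.ker φ ↔ (q : P) ∈ L := by
    intro q
    rw [LinearMap.mem_ker]
    constructor
    · intro hq
      have h0 : L.mkQ (q : P) = 0 := congrArg Subtype.val hq
      exact (Submodule.Quotient.mk_eq_zero L).mp h0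
    · intro hq
      exact Subtype.ext ((Submodule.Quotient.mk_eq_zero L).mpr hq)
  have hess : IsEssentialSub R (LinearMap.ker φ) := by
    intro K hK hbot
    have hKmap : Submodule.map Q.subtype K ≠ ⊥ := by
      intro hm
      apply hK
      apply Submodule.map_injective_of_injective Q.injective_subtype
      rw [hm, Submodule.map_bot]
    obtain ⟨x, hx, hx0⟩ := Submodule.exists_mem_ne_zero_of_ne_bot (hL _ hKmap)
    obtain ⟨hxL, hxK⟩ := Submodule.mem_inf.mp hx
    obtain ⟨k, hk, rfl⟩ := hxK
    have hkker : k ∈ LinearMap.ker φ := (hker k).mpr hxL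
    have hk0 : k ≠ 0 := by
      intro h0
      apply hx0
      rw [h0]
      rfl
    have hkmem : k ∈ (⊥ : Submodule R ↥Q) := hbot ▸ Submodule.mem_inf.mpr ⟨hkker, hk⟩
    exact hk0 ((Submodule.mem_bot R).mp hkmem)
  exact ⟨↥Q, inferInstance, inferInstance, LinearMap.ker φ, hess,
    ⟨(φ.quotKerEquivOfSurjective hφsurj).trans (LinearEquiv.ofInjective g hg).symm⟩⟩

theorem deltaSmall_mono {X Y : Submodule R M} (h : X ≤ Y) (hY : DeltaSmall R Y) :
    DeltaSmall R X := by
  intro Z hZ hs hX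
  exact hY Z hZ hs (top_unique (hX ▸ sup_le_sup_right h Z))

theorem deltaSmall_bot : DeltaSmall R (⊥ : Submodule R M) := by
  intro Z hZ _ hX
  exact hZ (by simpa using hX)

theorem isSingular_quot_of_le {Z W : Submodule R M} (h : Z ≤ W)
    (hs : IsSingular R (M ⧸ Z)) : IsSingular R (M ⧸ W) := by
  refine isSingular_of_surjective (Submodule.mapQ Z W LinearMap.id (by simpa using h)) ?_ hs
  intro y
  obtain ⟨x, rfl⟩ := W.mkQ_surjective y
  exact ⟨Z.mkQ x, by simp [Submodule.mapQ_apply]⟩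

theorem deltaSmall_sup {X Y : Submodule R M} (hX : DeltaSmall R X) (hY : DeltaSmall R Y) :
    DeltaSmall R (X ⊔ Y) := by
  intro Z hZ hs htop
  have h1 : Y ⊔ Z ≠ ⊤ := hY Z hZ hs
  have hs' : IsSingular R (M ⧸ (Y ⊔ Z)) := isSingular_quot_of_le le_sup_right hs
  exact hX (Y ⊔ Z) h1 hs' (by rw [← sup_assoc]; exact htop)

theorem deltaSmall_map_subtype {N : Submodule R M} {X : Submodule R ↥N}
    (hX : DeltaSmall R X) : DeltaSmall R (X.map N.subtype) := by
  intro Z hZ hs htop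
  set Z' : Submodule R ↥N := Z.comap N.subtype with hZ'def
  by_cases hZ' : Z' = ⊤
  · have hNZ : N ≤ Z := by
      intro x hx
      have : (⟨x, hx⟩ : ↥N) ∈ Z' := hZ' ▸ Submodule.mem_top
      exact this
    have hXZ : X.map N.subtype ≤ Z := le_trans (Submodule.map_subtype_le N X) hNZ
    exact hZ (by rw [← htop, sup_eq_right.mpr hXZ])
  · have hsup : X ⊔ Z' = ⊤ := by
      rw [eq_top_iff]
      rintro n -
      have hmem : (n : M) ∈ X.map N.subtype ⊔ Z := htop ▸ Submodule.mem_top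
      obtain ⟨a, ha, z, hz, hsum⟩ := Submodule.mem_sup.mp hmem
      obtain ⟨a', ha', rfl⟩ := ha
      have hzN : z ∈ N := by
        have hsum' : (a' : M) + z = (n : M) := hsum
        have : z = (n : M) - (a' : M) := by rw [← hsum']; abel
        rw [this]
        exact Submodule.sub_mem N n.2 a'.2
      refine Submodule.mem_sup.mpr ⟨a', ha', ⟨z, hzN⟩, hz, ?_⟩
      exact Subtype.ext hsum
    have hιinj : Function.Injective (Submodule.mapQ Z' Z N.subtype (fun x hx => hx)) := by
      rw [← LinearMap.ker_eq_bot]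
      rw [eq_bot_iff]
      intro y hy
      obtain ⟨x, rfl⟩ := Z'.mkQ_surjective y
      simp only [LinearMap.mem_ker, Submodule.mkQ_apply, Submodule.mapQ_apply] at hy
      have : (x : M) ∈ Z := (Submodule.Quotient.mk_eq_zero Z).mp hy
      simpa [Submodule.Quotient.mk_eq_zero, hZ'def] using this
    have hsing : IsSingular R (↥N ⧸ Z') :=
      isSingular_of_injective _ hιinj hs
    exact hX Z' hZ' hsing hsup

theorem deltaSmall_comap_subtype {N K X : Submodule R M} (hNK : N ⊔ K = ⊤)
    (hδ : DeltaSmall R ((N ⊓ K).comap N.subtype)) (hXN : X ≤ N) (hX : DeltaSmall R X) :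
    DeltaSmall R (X.comap N.subtype) := by
  intro Z hZ hsing htop
  set Z₀ : Submodule R M := Z.map N.subtype with hZ₀def
  have hZ₀N : Z₀ ≤ N := Submodule.map_subtype_le N Z
  have h1 : X ⊔ Z₀ = N := by
    have hmap := congrArg (Submodule.map N.subtype) htop
    rw [Submodule.map_sup, Submodule.map_comap_subtype, Submodule.map_subtype_top,
      inf_eq_right.mpr hXN] at hmap
    exact hmap
  -- singularity of M ⧸ (Z₀ ⊔ K)
  have hle : Z ≤ LinearMap.ker ((Z₀ ⊔ K).mkQ ∘ₗ N.subtype) := by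
    intro z hz
    have : (z : M) ∈ Z₀ ⊔ K := le_sup_left (α := Submodule R M) ⟨z, hz, rfl⟩
    simpa [LinearMap.mem_ker, Submodule.Quotient.mk_eq_zero] using this
  have hρsurj : Function.Surjective (Submodule.liftQ Z ((Z₀ ⊔ K).mkQ ∘ₗ N.subtype) hle) := by
    intro y
    obtain ⟨x, rfl⟩ := (Z₀ ⊔ K).mkQ_surjective y
    have hxmem : x ∈ N ⊔ K := hNK ▸ Submodule.mem_top
    obtain ⟨n, hn, k, hk, hsum⟩ := Submodule.mem_sup.mp hxmem
    refine ⟨Z.mkQ ⟨n, hn⟩, ?_⟩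
    have hk0 : (Z₀ ⊔ K).mkQ k = 0 := (Submodule.Quotient.mk_eq_zero _).mpr (le_sup_right (α := Submodule R M) hk)
    calc Submodule.liftQ Z ((Z₀ ⊔ K).mkQ ∘ₗ N.subtype) hle (Z.mkQ ⟨n, hn⟩)
        = (Z₀ ⊔ K).mkQ n := rfl
      _ = (Z₀ ⊔ K).mkQ n + (Z₀ ⊔ K).mkQ k := by rw [hk0, add_zero]
      _ = (Z₀ ⊔ K).mkQ x := by rw [← map_add, hsum]
  have hsing' : IsSingular R (M ⧸ (Z₀ ⊔ K)) := isSingular_of_surjective _ hρsurj hsing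
  by_cases htopZK : Z₀ ⊔ K = ⊤
  · have h2 : Z₀ ⊔ K ⊓ N = N := by
      rw [← sup_inf_assoc_of_le K hZ₀N, htopZK, top_inf_eq]
    have h3 : Z ⊔ (N ⊓ K).comap N.subtype = ⊤ := by
      apply Submodule.map_injective_of_injective N.injective_subtype
      rw [Submodule.map_sup, Submodule.map_comap_subtype, Submodule.map_subtype_top,
        ← inf_assoc, inf_idem, inf_comm N K, h2]
    exact hδ Z hZ hsing (by rw [sup_comm]; exact h3)
  · have h4 : X ⊔ (Z₀ ⊔ K) = ⊤ := by rw [← sup_assoc, h1, hNK]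
    exact hX (Z₀ ⊔ K) htopZK hsing' h4

end AuxProof

theorem deltaRad_of_deltaSupplement {R : Type*} [Ring R] {M : Type*} [AddCommGroup M]
    [Module R M] (N : Submodule R M) (h : IsDeltaSupplementSub R N) :
    Submodule.map N.subtype (deltaRad R : Submodule R N) = N ⊓ deltaRad R := by
  obtain ⟨K, hNK, hδ⟩ := h
  apply le_antisymm
  · refine le_inf (Submodule.map_subtype_le N _) ?_
    have hrw : (deltaRad R : Submodule R ↥N)
        = ⨆ X : {X : Submodule R ↥N | DeltaSmall R X}, (X : Submodule R ↥N) := by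
      rw [deltaRad, sSup_eq_iSup']
    rw [hrw, Submodule.map_iSup]
    refine iSup_le fun X => ?_
    exact le_sSup (deltaSmall_map_subtype X.2)
  · intro x hx
    obtain ⟨hxN, hxδ⟩ := Submodule.mem_inf.mp hx
    have hdir : Directed (· ≤ ·)
        (fun X : {X : Submodule R M | DeltaSmall R X} => (X : Submodule R M)) := by
      rintro ⟨A, hA⟩ ⟨B, hB⟩
      exact ⟨⟨A ⊔ B, deltaSmall_sup hA hB⟩, le_sup_left, le_sup_right⟩
    have hne : Nonempty {X : Submodule R M | DeltaSmall R X} := ⟨⟨⊥, deltaSmall_bot⟩⟩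
    rw [deltaRad, sSup_eq_iSup'] at hxδ
    obtain ⟨⟨X, hX⟩, hxX⟩ := (Submodule.mem_iSup_of_directed _ hdir).mp hxδ
    have hspanX : (R ∙ x) ≤ X := (Submodule.span_singleton_le_iff_mem x X).mpr hxX
    have hsmall : DeltaSmall R (R ∙ x) := deltaSmall_mono hspanX hX
    have hspanN : (R ∙ x) ≤ N := (Submodule.span_singleton_le_iff_mem x N).mpr hxN
    have key : DeltaSmall R ((R ∙ x).comap N.subtype) :=
      deltaSmall_comap_subtype hNK hδ hspanN hsmall
    have hmem : x ∈ Submodule.map N.subtype ((R ∙ x).comap N.subtype) :=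
      ⟨⟨x, hxN⟩, Submodule.mem_span_singleton_self x, rfl⟩
    exact Submodule.map_mono (le_sSup key) hmem
end

section
/- Let M be a finitely generated δ-supplemented left R-module. Then M is semilocal (i.e., M/Rad(M) is semisimple) if and only if Soc(M)/(Soc(M) ∩ Rad(M)) is finitely generated. -/
open Submodule

section Aux

universe u v

open LinearMap

variable {R : Type u} [Ring R] {M : Type v} [AddCommGroup M] [Module R M]

theorem isSingular_congr {P Q : Type v} [AddCommGroup P] [Module R P] [AddCommGroup Q] [Module R Q]
    (h : IsSingular R P) (e : P ≃ₗ[R] Q) : IsSingular R Q := by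
  obtain ⟨N, i1, i2, L, hL, ⟨f⟩⟩ := h
  exact ⟨N, i1, i2, L, hL, ⟨f.trans e⟩⟩

theorem isSingular_quotient_of_essential {k : Submodule R M} (hk : IsEssentialSub R k) :
    IsSingular R (M ⧸ k) := by
  exact ⟨M, inferInstance, inferInstance, k, hk, ⟨LinearEquiv.refl R (M ⧸ k)⟩⟩

theorem essential_of_coatom_soc {k : Submodule R M} (hk : IsCoatom k) (hsoc : socM R ≤ k) :
    IsEssentialSub R k := by
  intro B hB hcon
  by_cases hBk : B ≤ k
  · exact hB (by rw [inf_eq_right.2 hBk] at hcon; exact hcon)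
  · have hsup : k ⊔ B = ⊤ :=
      hk.2 _ (lt_of_le_of_ne le_sup_left fun hEq => hBk (hEq ▸ le_sup_right))
    set ψ : ↥B →ₗ[R] M ⧸ k := k.mkQ.comp B.subtype with hψ
    have hinj : Function.Injective ψ := by
      rw [← LinearMap.ker_eq_bot]
      rw [eq_bot_iff]
      rintro ⟨x, hxB⟩ hx
      have hxk : x ∈ k := by
        simpa [hψ, Submodule.Quotient.mk_eq_zero] using hx
      have : x ∈ k ⊓ B := ⟨hxk, hxB⟩
      rw [hcon] at this
      exact (Submodule.mem_bot R).2 (Subtype.ext ((Submodule.mem_bot R).1 this))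
    have hsurj : Function.Surjective ψ := by
      intro y
      obtain ⟨x, rfl⟩ := Submodule.mkQ_surjective k y
      have hx : x ∈ k ⊔ B := hsup.symm ▸ Submodule.mem_top
      obtain ⟨κ, hκ, b, hb, hkb⟩ := Submodule.mem_sup.1 hx
      refine ⟨⟨b, hb⟩, ?_⟩
      show k.mkQ b = k.mkQ x
      rw [Submodule.mkQ_apply, Submodule.mkQ_apply, Submodule.Quotient.eq]
      have : b - x = -κ := by rw [← hkb]; abel
      rw [this]; exact k.neg_mem hκ
    have e : ↥B ≃ₗ[R] M ⧸ k := LinearEquiv.ofBijective ψ ⟨hinj, hsurj⟩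
    haveI : IsSimpleModule R (M ⧸ k) := isSimpleModule_iff_isCoatom.2 hk
    haveI : IsSimpleModule R ↥B := IsSimpleModule.congr e
    have hatom : IsAtom B := isSimpleModule_iff_isAtom.1 ‹_›
    have hBsoc : B ≤ socM R := le_sSup hatom
    exact hBk (le_trans hBsoc hsoc)

theorem deltaSupp_inf_le_coatom {V U k : Submodule R M} (hVU : IsDeltaSupplement R V U)
    (hk : IsCoatom k) (hsoc : socM R ≤ k) : V ⊓ U ≤ k := by
  by_contra hne
  have hsup2 : (V ⊓ U) ⊔ k = ⊤ :=
    hk.2 _ (lt_of_le_of_ne le_sup_right fun hEq => hne (hEq ▸ le_sup_left))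
  have hVk : V ⊔ k = ⊤ := top_le_iff.1 (hsup2 ▸ sup_le_sup_right inf_le_left k)
  set Z : Submodule R ↥V := Submodule.comap V.subtype k with hZdef
  have hZtop : Z ≠ ⊤ := by
    intro htop
    apply hne
    intro x hx
    have : (⟨x, hx.1⟩ : ↥V) ∈ Z := htop ▸ Submodule.mem_top
    exact this
  set ψ : ↥V →ₗ[R] M ⧸ k := k.mkQ.comp V.subtype with hψ
  have hker : ker ψ = Z := by
    ext x
    simp [hψ, hZdef, Submodule.Quotient.mk_eq_zero]
  have hsurj : Function.Surjective ψ := by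
    intro y
    obtain ⟨x, rfl⟩ := Submodule.mkQ_surjective k y
    have hx : x ∈ V ⊔ k := hVk.symm ▸ Submodule.mem_top
    obtain ⟨v, hv, κ, hκ, hvk⟩ := Submodule.mem_sup.1 hx
    refine ⟨⟨v, hv⟩, ?_⟩
    show k.mkQ v = k.mkQ x
    rw [Submodule.mkQ_apply, Submodule.mkQ_apply, Submodule.Quotient.eq]
    have : v - x = -κ := by rw [← hvk]; abel
    rw [this]; exact k.neg_mem hκ
  have hsing : IsSingular R (↥V ⧸ Z) := by
    have e : (↥V ⧸ Z) ≃ₗ[R] M ⧸ k :=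
      (Submodule.quotEquivOfEq Z (ker ψ) hker.symm).trans (ψ.quotKerEquivOfSurjective hsurj)
    exact isSingular_congr
      (isSingular_quotient_of_essential (essential_of_coatom_soc hk hsoc)) (by exact e.symm)
  have hjoin : (V ⊓ U).comap V.subtype ⊔ Z = ⊤ := by
    rw [eq_top_iff]
    rintro ⟨x, hxV⟩ -
    have hx : x ∈ (V ⊓ U) ⊔ k := hsup2.symm ▸ Submodule.mem_top
    obtain ⟨w, hw, κ, hκ, hwκ⟩ := Submodule.mem_sup.1 hx
    have hκV : κ ∈ V := by
      have : κ = x - w := by rw [← hwκ]; abel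
      rw [this]; exact V.sub_mem hxV hw.1
    refine Submodule.mem_sup.2 ⟨⟨w, hw.1⟩, hw, ⟨κ, hκV⟩, hκ, ?_⟩
    exact Subtype.ext hwκ
  exact hVU.2 Z hZtop hsing hjoin

theorem map_atom_or_bot {P : Type v} [AddCommGroup P] [Module R P] (f : M →ₗ[R] P)
    {A : Submodule R M} (hA : IsAtom A) : Submodule.map f A = ⊥ ∨ IsAtom (Submodule.map f A) := by
  by_cases hbot : Submodule.map f A = ⊥
  · exact Or.inl hbot
  refine Or.inr ⟨hbot, fun B hB => ?_⟩
  by_contra hBne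
  obtain ⟨b, hbB, hb0⟩ := (Submodule.ne_bot_iff B).1 hBne
  have hbA : b ∈ Submodule.map f A := hB.le hbB
  obtain ⟨a, haA, rfl⟩ := Submodule.mem_map.1 hbA
  have ha' : A ⊓ Submodule.comap f B ≠ ⊥ := by
    intro h0
    have : a ∈ A ⊓ Submodule.comap f B := ⟨haA, hbB⟩
    rw [h0] at this
    exact hb0 (by rw [(Submodule.mem_bot R).1 this, map_zero])
  have heq : A ⊓ Submodule.comap f B = A := by
    rcases eq_or_lt_of_le (inf_le_left : A ⊓ Submodule.comap f B ≤ A) with h | h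
    · exact h
    · exact absurd (hA.2 _ h) ha'
  have hle : A ≤ Submodule.comap f B := heq ▸ inf_le_right
  exact hB.ne (le_antisymm hB.le (Submodule.map_le_iff_le_comap.2 hle))

theorem isArtinian_of_isAtom {A : Submodule R M} (hA : IsAtom A) : IsArtinian R ↥A := by
  haveI : IsSimpleModule R ↥A := isSimpleModule_iff_isAtom.2 hA
  constructor
  constructor
  have hacc : Acc (· < ·) (⊥ : Submodule R ↥A) :=
    Acc.intro _ fun y hy => absurd hy (by simp)
  intro a
  rcases eq_bot_or_eq_top a with rfl | rfl
  · exact hacc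
  · refine Acc.intro _ fun y hy => ?_
    rcases eq_bot_or_eq_top y with rfl | rfl
    · exact hacc
    · exact absurd hy (lt_irrefl _)

theorem isArtinian_bot : IsArtinian R ↥(⊥ : Submodule R M) := by
  haveI : Subsingleton (Submodule R ↥(⊥ : Submodule R M)) := by
    constructor
    intro p q
    ext ⟨x, hx⟩
    have hx0 : x = 0 := (Submodule.mem_bot R).1 hx
    subst hx0
    have h1 : (⟨0, hx⟩ : ↥(⊥ : Submodule R M)) = 0 := rfl
    rw [h1]
    simp [p.zero_mem, q.zero_mem]
  constructor
  constructor
  intro a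
  exact Acc.intro _ fun y hy => absurd (Subsingleton.elim y a) (ne_of_lt hy)

theorem comp_lemma (hrad : sInf {K : Submodule R M | IsCoatom K} = ⊥)
    (S : Submodule R M) (hart : IsArtinian R ↥S) (d : Submodule R ↥S) :
    ∀ U C : Submodule R M, U ⊔ C = ⊤ → U ⊓ C = Submodule.map S.subtype d →
      ∃ C', U ⊓ C' = ⊥ ∧ U ⊔ C' = ⊤ := by
  refine hart.wf.induction
    (C := fun d => ∀ U C : Submodule R M, U ⊔ C = ⊤ → U ⊓ C = Submodule.map S.subtype d →
      ∃ C', U ⊓ C' = ⊥ ∧ U ⊔ C' = ⊤) d ?_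
  clear d
  intro d IH U C hsup hinf
  by_cases hd : Submodule.map S.subtype d = ⊥
  · exact ⟨C, hinf.trans hd, hsup⟩
  · have hdne : d ≠ ⊥ := fun h => hd (by rw [h, Submodule.map_bot])
    obtain ⟨e, ⟨heled, hene⟩, hmin⟩ :=
      hart.wf.has_min {e | e ≤ d ∧ e ≠ ⊥} ⟨d, le_refl d, hdne⟩
    set A := Submodule.map S.subtype e with hAdef
    have hAne : A ≠ ⊥ := by
      intro h
      apply hene
      rw [eq_bot_iff]
      intro x hx
      have hmem : x.1 ∈ A := Submodule.mem_map_of_mem hx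
      rw [h] at hmem
      exact (Submodule.mem_bot _).2 (Subtype.ext ((Submodule.mem_bot R).1 hmem))
    have hAS : A ≤ S := Submodule.map_subtype_le S e
    have hAatom : IsAtom A := by
      refine ⟨hAne, fun F hF => ?_⟩
      by_contra hFne
      set f := Submodule.comap S.subtype F with hfdef
      have hFS : F ≤ S := le_trans hF.le hAS
      have hmapf : Submodule.map S.subtype f = F := by
        rw [hfdef, Submodule.map_comap_subtype, inf_eq_right.2 hFS]
      have hfe : f ≤ e := by
        intro x hx
        have hx' : x.1 ∈ A := hF.le hx
        obtain ⟨y, hy, hyx⟩ := Submodule.mem_map.1 hx'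
        have : y = x := Subtype.ext hyx
        exact this ▸ hy
      have hfbot : f ≠ ⊥ := fun h => hFne (by rw [← hmapf, h, Submodule.map_bot])
      have hnotlt := hmin f ⟨le_trans hfe heled, hfbot⟩
      have hfeq : f = e := by
        by_contra hne'
        exact hnotlt (lt_of_le_of_ne hfe hne')
      exact hF.ne (by rw [← hmapf, hfeq])
    have hAle : A ≤ U ⊓ C := by rw [hinf]; exact Submodule.map_mono heled
    obtain ⟨m, hm, hAm⟩ : ∃ m : Submodule R M, IsCoatom m ∧ ¬ A ≤ m := by
      by_contra hall
      push_neg at hall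
      exact hAne (le_bot_iff.1 (hrad ▸ le_sInf fun m hm => hall m hm))
    have hsupAm : A ⊔ m = ⊤ :=
      hm.2 _ (lt_of_le_of_ne le_sup_right fun hEq => hAm (hEq ▸ le_sup_left))
    have hinfAm : A ⊓ m = ⊥ :=
      hAatom.2 _ (lt_of_le_of_ne inf_le_left fun hEq => hAm (by rw [← hEq]; exact inf_le_right))
    have hAC : A ≤ C := le_trans hAle inf_le_right
    have hAU : A ≤ U := le_trans hAle inf_le_left
    have hCdec : A ⊔ (m ⊓ C) = C := by
      have h := sup_inf_assoc_of_le (x := A) m (z := C) hAC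
      rw [hsupAm, top_inf_eq] at h
      exact h.symm
    have hsup' : U ⊔ (C ⊓ m) = ⊤ := by
      rw [inf_comm]
      have h1 : U ⊔ (m ⊓ C) = U ⊔ (A ⊔ (m ⊓ C)) := by rw [← sup_assoc, sup_eq_left.2 hAU]
      rw [h1, hCdec, hsup]
    set D' := (U ⊓ C) ⊓ m with hD'def
    have hD'S : D' ≤ S := le_trans inf_le_left (by rw [hinf]; exact Submodule.map_subtype_le S d)
    set d' := Submodule.comap S.subtype D' with hd'def
    have hmapd' : Submodule.map S.subtype d' = D' := by
      rw [hd'def, Submodule.map_comap_subtype, inf_eq_right.2 hD'S]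
    have hd'd : d' ≤ d := by
      intro x hx
      have hx1 : x.1 ∈ D' := hx
      have hx2 : x.1 ∈ U ⊓ C := (inf_le_left : (U ⊓ C) ⊓ m ≤ U ⊓ C) hx1
      rw [hinf] at hx2
      obtain ⟨y, hy, hyx⟩ := Submodule.mem_map.1 hx2
      exact (Subtype.ext hyx : y = x) ▸ hy
    have hd'lt : d' < d := by
      refine lt_of_le_of_ne hd'd fun hEq => ?_
      have hDeq : D' = U ⊓ C := by rw [← hmapd', hEq, ← hinf]
      apply hAm
      calc A ≤ U ⊓ C := hAle
        _ = D' := hDeq.symm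
        _ ≤ m := inf_le_right
    obtain ⟨C', h1, h2⟩ := IH d' hd'lt U (C ⊓ m) hsup' (by rw [← inf_assoc, ← hD'def]; exact hmapd'.symm)
    exact ⟨C', h1, h2⟩

theorem coatom_map_mkQ {p k : Submodule R M} (hle : p ≤ k) (hk : IsCoatom k) :
    IsCoatom (Submodule.map p.mkQ k) := by
  constructor
  · intro htop
    have h1 : Submodule.comap p.mkQ (Submodule.map p.mkQ k) = ⊤ := by
      rw [htop, Submodule.comap_top]
    rw [Submodule.comap_map_eq, Submodule.ker_mkQ, sup_eq_left.2 hle] at h1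
    exact hk.1 h1
  · intro Z hZ
    have hkc : k ≤ Submodule.comap p.mkQ Z := fun x hx => hZ.le (Submodule.mem_map_of_mem hx)
    have hmc : Submodule.map p.mkQ (Submodule.comap p.mkQ Z) = Z := by
      rw [Submodule.map_comap_eq, Submodule.range_mkQ, top_inf_eq]
    have hne : k ≠ Submodule.comap p.mkQ Z := by
      intro hEq
      exact hZ.ne (by rw [hEq, hmc])
    have htop : Submodule.comap p.mkQ Z = ⊤ := hk.2 _ (lt_of_le_of_ne hkc hne)
    rw [← hmc, htop, Submodule.map_top, Submodule.range_mkQ]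

theorem coatom_comap_mkQ {p : Submodule R M} {κ : Submodule R (M ⧸ p)} (hκ : IsCoatom κ) :
    IsCoatom (Submodule.comap p.mkQ κ) := by
  have hmc : Submodule.map p.mkQ (Submodule.comap p.mkQ κ) = κ := by
    rw [Submodule.map_comap_eq, Submodule.range_mkQ, top_inf_eq]
  have hpκ : p ≤ Submodule.comap p.mkQ κ := by
    intro y hy
    show p.mkQ y ∈ κ
    have : p.mkQ y = 0 := by rw [Submodule.mkQ_apply, Submodule.Quotient.mk_eq_zero]; exact hy
    rw [this]; exact κ.zero_mem
  constructor
  · intro htop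
    apply hκ.1
    rw [← hmc, htop, Submodule.map_top, Submodule.range_mkQ]
  · intro Z hZ
    have h1 : κ ≤ Submodule.map p.mkQ Z := by rw [← hmc]; exact Submodule.map_mono hZ.le
    have h2 : κ ≠ Submodule.map p.mkQ Z := by
      intro hEq
      apply hZ.ne
      refine le_antisymm hZ.le fun z hz => ?_
      show p.mkQ z ∈ κ
      rw [hEq]
      exact Submodule.mem_map_of_mem hz
    have htop : Submodule.map p.mkQ Z = ⊤ := hκ.2 _ (lt_of_le_of_ne h1 h2)
    rw [eq_top_iff]
    intro x _
    have hx : p.mkQ x ∈ Submodule.map p.mkQ Z := by rw [htop]; exact Submodule.mem_top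
    obtain ⟨z, hzZ, hz⟩ := Submodule.mem_map.1 hx
    have hxz : z - x ∈ p := by
      rw [← Submodule.Quotient.eq p]
      exact hz
    have hpZ : p ≤ Z := le_trans hpκ hZ.le
    have := Z.sub_mem hzZ (hpZ hxz)
    simpa using this

theorem radX_eq_bot :
    sInf {K : Submodule R (M ⧸ (radM R : Submodule R M)) | IsCoatom K} = ⊥ := by
  rw [eq_bot_iff]
  intro x hx
  obtain ⟨y, rfl⟩ := Submodule.mkQ_surjective _ x
  have hy : y ∈ (radM R : Submodule R M) := by
    rw [radM, Submodule.mem_sInf]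
    intro k hk
    have hle : (radM R : Submodule R M) ≤ k := sInf_le hk
    have hco := coatom_map_mkQ hle hk
    have hxk : (radM R : Submodule R M).mkQ y ∈ Submodule.map (radM R : Submodule R M).mkQ k :=
      (Submodule.mem_sInf.1 hx) _ hco
    obtain ⟨z, hz, hzy⟩ := Submodule.mem_map.1 hxk
    have hsub : z - y ∈ (radM R : Submodule R M) := by
      rw [← Submodule.Quotient.eq]
      exact hzy
    have := k.sub_mem hz (hle hsub)
    simpa using this
  show (radM R : Submodule R M).mkQ y ∈ (⊥ : Submodule R (M ⧸ (radM R : Submodule R M)))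
  rw [Submodule.mem_bot, Submodule.mkQ_apply, Submodule.Quotient.mk_eq_zero]
  exact hy

theorem inter_le_of_coatoms (hrad : sInf {K : Submodule R M | IsCoatom K} = ⊥)
    {S C₀ D : Submodule R M} (h1 : S ⊓ C₀ = ⊥) (h2 : S ⊔ C₀ = ⊤)
    (hD : ∀ κ : Submodule R M, IsCoatom κ → S ≤ κ → D ≤ κ) : D ≤ S := by
  intro ξ hξ
  have hξ2 : ξ ∈ S ⊔ C₀ := h2.symm ▸ Submodule.mem_top
  obtain ⟨s, hs, c, hc, hsc⟩ := Submodule.mem_sup.1 hξ2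
  suffices hcz : c = 0 by rw [← hsc, hcz, add_zero]; exact hs
  by_contra hc0
  have hnc : ¬ c ∈ sInf {K : Submodule R M | IsCoatom K} := by
    rw [hrad]
    simpa using hc0
  obtain ⟨κ₁, hκ₁, hcκ₁⟩ : ∃ κ₁ : Submodule R M, IsCoatom κ₁ ∧ c ∉ κ₁ := by
    by_contra hall
    push_neg at hall
    exact hnc (Submodule.mem_sInf.2 hall)
  set Z₀ := S ⊔ (C₀ ⊓ κ₁) with hZ₀def
  have hcZ₀ : c ∈ Z₀ → c ∈ κ₁ := by
    intro hcz
    obtain ⟨s', hs', c₁, hc₁, hsc'⟩ := Submodule.mem_sup.1 hcz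
    have hs'C : s' ∈ C₀ := by
      have h : s' = c - c₁ := by rw [← hsc']; abel
      rw [h]; exact C₀.sub_mem hc hc₁.1
    have hmem : s' ∈ S ⊓ C₀ := ⟨hs', hs'C⟩
    rw [h1] at hmem
    have hs'0 : s' = 0 := (Submodule.mem_bot R).1 hmem
    rw [← hsc', hs'0, zero_add]
    exact hc₁.2
  have hZ₀ne : Z₀ ≠ ⊤ := fun htop => hcκ₁ (hcZ₀ (htop.symm ▸ Submodule.mem_top))
  have hZ₀co : IsCoatom Z₀ := by
    refine ⟨hZ₀ne, fun Y hY => ?_⟩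
    have hSY : S ≤ Y := le_trans le_sup_left hY.le
    have hYC : ¬ (Y ⊓ C₀ ≤ κ₁) := by
      intro hyc
      have hYeq : Y = S ⊔ (C₀ ⊓ Y) := by
        have h := sup_inf_assoc_of_le (x := S) C₀ (z := Y) hSY
        rw [h2, top_inf_eq] at h
        exact h
      have hYle : Y ≤ Z₀ := by
        rw [hYeq, hZ₀def]
        refine sup_le_sup_left ?_ S
        refine le_inf inf_le_left ?_
        rw [inf_comm]
        exact hyc
      exact absurd hYle hY.not_ge
    have hsupκ : (Y ⊓ C₀) ⊔ κ₁ = ⊤ :=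
      hκ₁.2 _ (lt_of_le_of_ne le_sup_right fun hEq => hYC (hEq ▸ le_sup_left))
    have hC₀eq : (Y ⊓ C₀) ⊔ (κ₁ ⊓ C₀) = C₀ := by
      have h := sup_inf_assoc_of_le (x := Y ⊓ C₀) κ₁ (z := C₀) inf_le_right
      rw [hsupκ, top_inf_eq] at h
      exact h.symm
    have hCY : C₀ ≤ Y := by
      rw [← hC₀eq]
      refine sup_le inf_le_left (le_trans ?_ hY.le)
      rw [hZ₀def, inf_comm]
      exact le_sup_right
    rw [eq_top_iff, ← h2]
    exact sup_le hSY hCY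
  have hDZ := hD Z₀ hZ₀co le_sup_left
  have hξZ : s + c ∈ Z₀ := hDZ (hsc ▸ hξ)
  have hsZ : s ∈ Z₀ := (le_sup_left : S ≤ Z₀) hs
  have hcZ : c ∈ Z₀ := by
    have := Z₀.sub_mem hξZ hsZ
    simpa using this
  exact hcκ₁ (hcZ₀ hcZ)

end Aux

theorem semilocal_iff_socle_quotient_fg {R : Type*} [Ring R] (M : Type*) [AddCommGroup M]
    [Module R M] [Module.Finite R M] (h : DeltaSupplemented R M) :
    IsSemisimpleModule R (M ⧸ (radM R : Submodule R M)) ↔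
      Module.Finite R
        (↥(socM R : Submodule R M) ⧸
          Submodule.comap (socM R : Submodule R M).subtype
            ((socM R : Submodule R M) ⊓ (radM R : Submodule R M))) := by
  classical
  set rad : Submodule R M := radM R with hraddef
  set soc : Submodule R M := socM R with hsocdef
  set Sb : Submodule R (M ⧸ rad) := Submodule.map rad.mkQ soc with hSbdef
  -- the canonical equivalence soc ⧸ (soc ⊓ rad) ≃ₗ Sb
  set φ : ↥soc →ₗ[R] M ⧸ rad := rad.mkQ.comp soc.subtype with hφdef
  have hker : LinearMap.ker φ = Submodule.comap soc.subtype (soc ⊓ rad) := by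
    ext x
    simp only [hφdef, LinearMap.mem_ker, LinearMap.comp_apply, Submodule.subtype_apply,
      Submodule.mkQ_apply, Submodule.Quotient.mk_eq_zero, Submodule.mem_comap, Submodule.mem_inf]
    exact ⟨fun hx => ⟨x.2, hx⟩, fun hx => hx.2⟩
  have hrange : LinearMap.range φ = Sb := by
    rw [hφdef, LinearMap.range_comp, Submodule.range_subtype, hSbdef]
  have e₀ : (↥soc ⧸ Submodule.comap soc.subtype (soc ⊓ rad)) ≃ₗ[R] ↥Sb :=
    (Submodule.quotEquivOfEq _ _ hker.symm).trans
      (φ.quotKerEquivRange.trans (LinearEquiv.ofEq _ _ hrange))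
  constructor
  · -- forward direction
    intro hss
    obtain ⟨C, hC⟩ := exists_isCompl Sb
    have e₁ : ((M ⧸ rad) ⧸ C) ≃ₗ[R] ↥Sb := Submodule.quotientEquivOfIsCompl C Sb hC.symm
    haveI : Module.Finite R ((M ⧸ rad) ⧸ C) := Module.Finite.quotient R C
    haveI : Module.Finite R ↥Sb := Module.Finite.equiv e₁
    exact Module.Finite.equiv e₀.symm
  · -- backward direction
    intro hfin
    haveI hfinSb : Module.Finite R ↥Sb := Module.Finite.equiv e₀
    have hSbFG : Sb.FG := Module.Finite.iff_fg.1 hfinSb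
    have hSbcomp : IsCompactElement Sb := (Submodule.fg_iff_compact Sb).1 hSbFG
    set f : {A : Submodule R M // IsAtom A} → Submodule R (M ⧸ rad) :=
      fun A => Submodule.map rad.mkQ A.1 with hfdef
    have hsoc2 : soc = ⨆ A : {A : Submodule R M // IsAtom A}, A.1 := by
      rw [hsocdef, socM, sSup_eq_iSup']
      rfl
    have hSbsup : Sb = ⨆ A : {A : Submodule R M // IsAtom A}, f A := by
      rw [hSbdef, hsoc2, Submodule.map_iSup]
    obtain ⟨t, ht⟩ := CompleteLattice.IsCompactElement.exists_finset_of_le_iSup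
      (Submodule R (M ⧸ rad)) hSbcomp f hSbsup.le
    have hEq : Sb = t.sup f := by
      refine le_antisymm (le_trans ht (by rw [Finset.sup_eq_iSup])) ?_
      refine Finset.sup_le fun A _ => ?_
      rw [hSbdef, hfdef]
      exact Submodule.map_mono (le_sSup A.2)
    have hartSup : IsArtinian R ↥(t.sup f) := by
      refine Finset.sup_induction (p := fun q : Submodule R (M ⧸ rad) => IsArtinian R ↥q) ?_ ?_ ?_
      · exact isArtinian_bot
      · intro a ha b hb
        haveI := ha; haveI := hb
        exact isArtinian_sup a b
      · intro A _
        rcases map_atom_or_bot rad.mkQ A.2 with hb | hat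
        · rw [show f A = ⊥ from hb]
          exact isArtinian_bot
        · exact isArtinian_of_isAtom hat
    have hartSb : IsArtinian R ↥Sb := hEq ▸ hartSup
    have hradX : sInf {K : Submodule R (M ⧸ rad) | IsCoatom K} = ⊥ := radX_eq_bot
    obtain ⟨C₀, hC₀1, hC₀2⟩ := comp_lemma hradX Sb hartSb (⊤ : Submodule R ↥Sb) Sb ⊤
      (by rw [sup_top_eq]) (by rw [inf_top_eq, Submodule.map_top, Submodule.range_subtype])
    rw [isSemisimpleModule_iff]
    constructor
    intro Ub
    set U : Submodule R M := Submodule.comap rad.mkQ Ub with hUdef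
    have hmapU : Submodule.map rad.mkQ U = Ub := by
      rw [hUdef, Submodule.map_comap_eq, Submodule.range_mkQ, top_inf_eq]
    obtain ⟨V, hV⟩ := h U
    set Vb : Submodule R (M ⧸ rad) := Submodule.map rad.mkQ V with hVbdef
    have hsupX : Ub ⊔ Vb = ⊤ := by
      rw [← hmapU, hVbdef, ← Submodule.map_sup, sup_comm U V, hV.1, Submodule.map_top,
        Submodule.range_mkQ]
    have hintX : Ub ⊓ Vb = Submodule.map rad.mkQ (V ⊓ U) := by
      apply le_antisymm
      · rintro x ⟨hxU, hxV⟩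
        obtain ⟨v, hv, rfl⟩ := Submodule.mem_map.1 hxV
        have hvU : v ∈ U := hxU
        exact Submodule.mem_map_of_mem ⟨hv, hvU⟩
      · refine le_inf ?_ ?_
        · rw [← hmapU]; exact Submodule.map_mono inf_le_right
        · rw [hVbdef]; exact Submodule.map_mono inf_le_left
    have hDle : ∀ κ : Submodule R (M ⧸ rad), IsCoatom κ → Sb ≤ κ → Ub ⊓ Vb ≤ κ := by
      intro κ hκ hSκ
      have hkco : IsCoatom (Submodule.comap rad.mkQ κ) := coatom_comap_mkQ hκ
      have hsock : socM R ≤ Submodule.comap rad.mkQ κ := by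
        intro x hx
        exact hSκ (Submodule.mem_map_of_mem hx)
      have hVU := deltaSupp_inf_le_coatom hV hkco hsock
      rw [hintX]
      rintro y hy
      obtain ⟨w, hw, rfl⟩ := Submodule.mem_map.1 hy
      exact hVU hw
    have hDS : Ub ⊓ Vb ≤ Sb := inter_le_of_coatoms hradX hC₀1 hC₀2 hDle
    set d : Submodule R ↥Sb := Submodule.comap Sb.subtype (Ub ⊓ Vb) with hddef
    have hmapd : Submodule.map Sb.subtype d = Ub ⊓ Vb := by
      rw [hddef, Submodule.map_comap_subtype, inf_eq_right.2 hDS]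
    obtain ⟨C', h1', h2'⟩ := comp_lemma hradX Sb hartSb d Ub Vb hsupX hmapd.symm
    exact ⟨C', disjoint_iff.2 h1', codisjoint_iff.2 h2'⟩
end
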